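/- Let Z ⊂ ℙ^n be the C(δ+n, n) intersection points of δ+n general hyperplanes with equations h_1, …, h_{δ+n} (δ ≥ 1). The space of homogeneous polynomials of degree δ+1 vanishing on Z has dimension C(δ+n, δ+1), and it is spanned by the products h_I = ∏_{i∈I} h_i for subsets I of size δ+1. -/

import Mathlib

open MvPolynomial

/-- The linear form with coefficient vector `c`, as a polynomial. -/
noncomputable def linForm {n : ℕ} (c : Fin n → ℂ) : MvPolynomial (Fin n) ℂ :=
  ∑ i, MvPolynomial.C (c i) * MvPolynomial.X i

/-- The affine cone over the point set `Z`: nonzero points lying on (at least) `n` of the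
hyperplanes `h_i = 0`. -/
def coneZ (n δ : ℕ) (h : Fin (δ + n) → (Fin (n + 1) → ℂ)) : Set (Fin (n + 1) → ℂ) :=
  {x | x ≠ 0 ∧ ∃ L : Finset (Fin (δ + n)), L.card = n ∧
    ∀ i ∈ L, MvPolynomial.eval x (linForm (h i)) = 0}

/-- The submodule of polynomials vanishing on `Z`. -/
noncomputable def vanishZ (n δ : ℕ) (h : Fin (δ + n) → (Fin (n + 1) → ℂ)) :
    Submodule ℂ (MvPolynomial (Fin (n + 1)) ℂ) :=
  ⨅ x ∈ coneZ n δ h, LinearMap.ker (MvPolynomial.aeval x).toLinearMap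

/-- dot product as a linear functional -/
noncomputable def dotL {m : ℕ} (c : Fin m → ℂ) : (Fin m → ℂ) →ₗ[ℂ] ℂ :=
  ∑ j, c j • LinearMap.proj j

lemma dotL_apply {m : ℕ} (c x : Fin m → ℂ) : dotL c x = ∑ j, c j * x j := by
  simp [dotL]

lemma dotL_comm {m : ℕ} (c x : Fin m → ℂ) : dotL c x = dotL x c := by
  simp [dotL_apply, mul_comm]

lemma eval_linForm {m : ℕ} (c x : Fin m → ℂ) :
    MvPolynomial.eval x (linForm c) = dotL c x := by
  simp [linForm, dotL_apply]

lemma aeval_eq_eval {m : ℕ} (x : Fin m → ℂ) (p : MvPolynomial (Fin m) ℂ) :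
    MvPolynomial.aeval x p = MvPolynomial.eval x p := by
  rw [MvPolynomial.aeval_def, MvPolynomial.eval, Algebra.algebraMap_self]
  rfl

lemma linForm_isHomogeneous {m : ℕ} (c : Fin m → ℂ) : (linForm c).IsHomogeneous 1 :=
  MvPolynomial.IsHomogeneous.sum _ _ _ fun i _ => MvPolynomial.isHomogeneous_C_mul_X _ _

lemma eval_smul_of_isHomogeneous {m d : ℕ} {p : MvPolynomial (Fin m) ℂ}
    (hp : p.IsHomogeneous d) (t : ℂ) (x : Fin m → ℂ) :
    MvPolynomial.eval (t • x) p = t ^ d * MvPolynomial.eval x p := by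
  rw [MvPolynomial.eval_eq, MvPolynomial.eval_eq, Finset.mul_sum]
  refine Finset.sum_congr rfl fun dm hdm => ?_
  have h1 : ∑ i ∈ dm.support, dm i = d := by
    have := hp (MvPolynomial.mem_support_iff.mp hdm)
    simpa [Finsupp.weight_apply, Finsupp.sum] using this
  rw [← h1, ← Finset.prod_pow_eq_pow_sum, mul_left_comm]
  congr 1
  rw [← Finset.prod_mul_distrib]
  refine Finset.prod_congr rfl fun i _ => ?_
  simp [mul_pow]

lemma exists_mem_forall_ne_zero {ι : Type*} [DecidableEq ι] (I : Finset ι) {V : Type*}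
    [AddCommGroup V] [Module ℂ V] (K : Submodule ℂ V) (ψ : ι → V →ₗ[ℂ] ℂ)
    (hex : ∀ i ∈ I, ∃ u ∈ K, ψ i u ≠ 0) : ∃ p ∈ K, ∀ i ∈ I, ψ i p ≠ 0 := by
  classical
  induction I using Finset.induction_on with
  | empty => exact ⟨0, K.zero_mem, by simp⟩
  | @insert a I ha ih =>
    obtain ⟨p, hpK, hp⟩ := ih fun i hi => hex i (Finset.mem_insert_of_mem hi)
    obtain ⟨u, huK, hu⟩ := hex a (Finset.mem_insert_self a I)
    have hfin : (⋃ i ∈ (insert a I : Finset ι), {t : ℂ | ψ i p + t * ψ i u = 0}).Finite := by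
      refine Set.Finite.biUnion (Finset.finite_toSet _) fun i hi => ?_
      refine Set.Subsingleton.finite fun t1 ht1 t2 ht2 => ?_
      simp only [Set.mem_setOf_eq] at ht1 ht2
      by_cases hu0 : ψ i u = 0
      · exfalso
        rcases Finset.mem_insert.mp (Finset.mem_coe.mp hi) with rfl | hiI
        · exact hu hu0
        · rw [hu0, mul_zero, add_zero] at ht1
          exact hp i hiI ht1
      · have ht : t1 * ψ i u = t2 * ψ i u := by linear_combination ht1 - ht2
        exact mul_right_cancel₀ hu0 ht
    obtain ⟨t, ht⟩ := hfin.infinite_compl.nonempty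
    refine ⟨p + t • u, K.add_mem hpK (K.smul_mem t huK), fun i hi h0 => ?_⟩
    apply ht
    have : ψ i p + t * ψ i u = 0 := by
      simpa [map_add, map_smul, smul_eq_mul] using h0
    exact Set.mem_biUnion (Finset.mem_coe.mpr hi) this

section Setup
variable {n δ : ℕ} {h : Fin (δ + n) → Fin (n + 1) → ℂ}

lemma eq_zero_of_dot (hgen : ∀ T : Finset (Fin (δ + n)), T.card = n + 1 →
      LinearIndependent ℂ (fun i : T => h i))
    {T : Finset (Fin (δ + n))} (hT : T.card = n + 1) {x : Fin (n + 1) → ℂ}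
    (hx : ∀ i ∈ T, dotL (h i) x = 0) : x = 0 := by
  have hne : Nonempty ↥T := by
    rw [Finset.nonempty_coe_sort]
    exact Finset.card_pos.mp (by omega)
  have hspan : Submodule.span ℂ (Set.range fun i : T => h i) = ⊤ :=
    (hgen T hT).span_eq_top_of_card_eq_finrank
      (by simp [Fintype.card_coe, hT, Module.finrank_pi])
  have hker : Submodule.span ℂ (Set.range fun i : T => h i) ≤ LinearMap.ker (dotL x) := by
    rw [Submodule.span_le]
    rintro _ ⟨i, rfl⟩
    simp only [SetLike.mem_coe, LinearMap.mem_ker]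
    rw [← dotL_comm]
    exact hx i i.2
  rw [hspan] at hker
  funext j
  have hm : dotL x (Pi.single j 1) = 0 := hker Submodule.mem_top
  simpa [dotL_apply, Pi.single_apply, mul_ite] using hm

/-- The intersection of the kernels over `L`. -/
noncomputable def KL (h : Fin (δ + n) → Fin (n + 1) → ℂ) (L : Finset (Fin (δ + n))) :
    Submodule ℂ (Fin (n + 1) → ℂ) :=
  ⨅ i ∈ L, LinearMap.ker (dotL (h i))

lemma mem_KL {L : Finset (Fin (δ + n))} {x : Fin (n + 1) → ℂ} :
    x ∈ KL h L ↔ ∀ i ∈ L, dotL (h i) x = 0 := by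
  simp [KL, Submodule.mem_iInf, LinearMap.mem_ker]

lemma ker_pi_eq (L : Finset (Fin (δ + n))) :
    LinearMap.ker (LinearMap.pi fun i : L => dotL (h i)) = KL h L := by
  ext x
  simp only [LinearMap.mem_ker, mem_KL]
  constructor
  · intro hx i hi
    exact congrFun hx ⟨i, hi⟩
  · intro hx
    funext i
    exact hx i i.2

lemma finrank_KL_ge (L : Finset (Fin (δ + n))) :
    n + 1 ≤ Module.finrank ℂ ↥(KL h L) + L.card := by
  have h1 := LinearMap.finrank_range_add_finrank_ker (LinearMap.pi fun i : L => dotL (h i))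
  rw [ker_pi_eq] at h1
  have h2 : Module.finrank ℂ ↥(LinearMap.range (LinearMap.pi fun i : L => dotL (h i))) ≤ L.card := by
    refine le_trans (Submodule.finrank_le _) ?_
    simp [Module.finrank_pi, Fintype.card_coe]
  have h3 : Module.finrank ℂ (Fin (n + 1) → ℂ) = n + 1 := by
    simp [Module.finrank_pi]
  omega

lemma exists_point {L : Finset (Fin (δ + n))} (hL : L.card ≤ n) :
    ∃ y : Fin (n + 1) → ℂ, y ≠ 0 ∧ y ∈ KL h L := by
  have h1 := finrank_KL_ge (h := h) L
  have h2 : 0 < Module.finrank ℂ ↥(KL h L) := by omega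
  obtain ⟨⟨y, hyK⟩, hy0⟩ := Module.finrank_pos_iff_exists_ne_zero.mp h2
  exact ⟨y, fun hy => hy0 (Subtype.ext hy), hyK⟩

lemma finrank_KL_le (hgen : ∀ T : Finset (Fin (δ + n)), T.card = n + 1 →
      LinearIndependent ℂ (fun i : T => h i)) (hδ : 1 ≤ δ)
    {L : Finset (Fin (δ + n))} (hL : L.card = n) :
    Module.finrank ℂ ↥(KL h L) ≤ 1 := by
  obtain ⟨T, hLT, -, hT⟩ := Finset.exists_subsuperset_card_eq (n := n + 1) (Finset.subset_univ L)
    (by omega) (by rw [Finset.card_univ, Fintype.card_fin]; omega)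
  have hTL : ∃ j, T \ L = {j} := by
    apply Finset.card_eq_one.mp
    rw [Finset.card_sdiff_of_subset hLT, hT, hL]
    omega
  obtain ⟨j, hj⟩ := hTL
  have hjT : j ∈ T := by
    have : j ∈ T \ L := by rw [hj]; exact Finset.mem_singleton_self j
    exact (Finset.mem_sdiff.mp this).1
  set f : ↥(KL h L) →ₗ[ℂ] ℂ := (dotL (h j)).comp (KL h L).subtype with hf
  have hinj : Function.Injective f := by
    rw [← LinearMap.ker_eq_bot]
    rw [Submodule.eq_bot_iff]
    rintro ⟨x, hxK⟩ hx
    have hx' : dotL (h j) x = 0 := hx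
    have : x = 0 := by
      refine eq_zero_of_dot hgen hT fun i hi => ?_
      by_cases hiL : i ∈ L
      · exact mem_KL.mp hxK i hiL
      · have : i ∈ T \ L := Finset.mem_sdiff.mpr ⟨hi, hiL⟩
        rw [hj, Finset.mem_singleton] at this
        rw [this]; exact hx'
    exact Subtype.ext this
  have := LinearMap.finrank_le_finrank_of_injective hinj
  simpa using this

end Setup

section Setup2
variable {n δ : ℕ} {h : Fin (δ + n) → Fin (n + 1) → ℂ}

lemma eq_smul_of_mem_KL (hgen : ∀ T : Finset (Fin (δ + n)), T.card = n + 1 →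
      LinearIndependent ℂ (fun i : T => h i)) (hδ : 1 ≤ δ)
    {L : Finset (Fin (δ + n))} (hL : L.card = n) {y x : Fin (n + 1) → ℂ}
    (hy0 : y ≠ 0) (hyK : y ∈ KL h L) (hxK : x ∈ KL h L) : ∃ c : ℂ, x = c • y := by
  have hspan : Submodule.span ℂ {y} = KL h L := by
    apply Submodule.eq_of_le_of_finrank_le
    · rw [Submodule.span_le, Set.singleton_subset_iff]; exact hyK
    · rw [finrank_span_singleton hy0]
      exact finrank_KL_le hgen hδ hL
  rw [← hspan] at hxK
  obtain ⟨c, hc⟩ := Submodule.mem_span_singleton.mp hxK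
  exact ⟨c, hc.symm⟩

end Setup2

lemma degree_toMultiset_card {α : Type*} (f : α →₀ ℕ) :
    Multiset.card (Finsupp.toMultiset f) = f.degree := by
  rw [Finsupp.card_toMultiset]
  simp [Finsupp.degree, Finsupp.sum]
  rfl

/-- monomials of degree k in m variables are in bijection with `Sym (Fin m) k` -/
noncomputable def degreeEquivSym (m k : ℕ) : {d : Fin m →₀ ℕ // d.degree = k} ≃ Sym (Fin m) k where
  toFun d := ⟨Finsupp.toMultiset d.1, by rw [degree_toMultiset_card]; exact d.2⟩
  invFun s := ⟨Multiset.toFinsupp s.1, by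
    rw [← degree_toMultiset_card, Multiset.toFinsupp_toMultiset]; exact s.2⟩
  left_inv d := by
    ext : 1
    simp [Finsupp.toMultiset_toFinsupp]
  right_inv s := by
    ext : 1
    simp [Multiset.toFinsupp_toMultiset]

lemma finrank_homog (m k : ℕ) :
    Module.finrank ℂ ↥(MvPolynomial.homogeneousSubmodule (Fin m) ℂ k) =
      (m + k - 1).choose k := by
  classical
  letI : Fintype {d : Fin m →₀ ℕ // d.degree = k} := Fintype.ofEquiv _ (degreeEquivSym m k).symm
  have hb : Module.finrank ℂ ↥(MvPolynomial.homogeneousSubmodule (Fin m) ℂ k) =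
      Fintype.card {d : Fin m →₀ ℕ // d.degree = k} := by
    rw [MvPolynomial.homogeneousSubmodule_eq_finsupp_supported]
    exact Module.finrank_eq_card_basis (MvPolynomial.basisRestrictSupport ℂ _)
  rw [hb, Fintype.card_congr (degreeEquivSym m k), Sym.card_sym_eq_choose, Fintype.card_fin]

instance finDimHomog (m k : ℕ) :
    FiniteDimensional ℂ ↥(MvPolynomial.homogeneousSubmodule (Fin m) ℂ k) := by
  apply Submodule.finiteDimensional_of_le (S₂ := MvPolynomial.restrictTotalDegree (Fin m) ℂ k)
  intro p hp
  rw [MvPolynomial.mem_restrictTotalDegree]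
  exact MvPolynomial.IsHomogeneous.totalDegree_le hp

section Main
variable {n δ : ℕ} {h : Fin (δ + n) → Fin (n + 1) → ℂ}

lemma eval_prodForm (x : Fin (n + 1) → ℂ) (I : Finset (Fin (δ + n))) :
    MvPolynomial.eval x (∏ i ∈ I, linForm (h i)) = ∏ i ∈ I, dotL (h i) x := by
  rw [map_prod]
  exact Finset.prod_congr rfl fun i _ => eval_linForm _ _

lemma prodForm_isHomog {I : Finset (Fin (δ + n))} (hI : I.card = δ + 1) :
    (∏ i ∈ I, linForm (h i)).IsHomogeneous (δ + 1) := by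
  have := MvPolynomial.IsHomogeneous.prod I (fun i => linForm (h i)) (fun _ => 1)
    (fun i _ => linForm_isHomogeneous (h i))
  simpa [Finset.sum_const, hI] using this

lemma lin_indep_prod (hgen : ∀ T : Finset (Fin (δ + n)), T.card = n + 1 →
      LinearIndependent ℂ (fun i : T => h i)) (hδ : 1 ≤ δ) :
    LinearIndependent ℂ
      (fun I : {I : Finset (Fin (δ + n)) // I.card = δ + 1} => ∏ i ∈ I.1, linForm (h i)) := by
  classical
  rw [Fintype.linearIndependent_iff]
  intro c hc I₀
  have hn1 : 1 ≤ n := by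
    have h1 := Finset.card_le_univ I₀.1
    rw [I₀.2, Fintype.card_fin] at h1
    omega
  set J : Finset (Fin (δ + n)) := I₀.1ᶜ with hJ
  have hJcard : J.card = n - 1 := by
    rw [hJ, Finset.card_compl, Fintype.card_fin, I₀.2]
    omega
  have h2 : 2 ≤ Module.finrank ℂ ↥(KL h J) := by
    have := finrank_KL_ge (h := h) J
    omega
  have hex : ∀ i ∈ I₀.1, ∃ u ∈ KL h J, dotL (h i) u ≠ 0 := by
    intro i hi
    by_contra hcon
    push_neg at hcon
    have hle : KL h J ≤ KL h (insert i J) := by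
      intro x hx
      rw [mem_KL]
      intro i' hi'
      rcases Finset.mem_insert.mp hi' with rfl | hi'J
      · exact hcon x hx
      · exact mem_KL.mp hx i' hi'J
    have hiJ : i ∉ J := by rw [hJ]; simp [hi]
    have hcard : (insert i J).card = n := by
      rw [Finset.card_insert_of_notMem hiJ, hJcard]
      omega
    have hup := finrank_KL_le hgen hδ hcard
    have hmono := Submodule.finrank_mono hle
    omega
  obtain ⟨p, hpK, hpne⟩ := exists_mem_forall_ne_zero I₀.1 (KL h J) (fun i => dotL (h i)) hex
  have heval := congrArg (MvPolynomial.eval p) hc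
  rw [map_sum, map_zero] at heval
  have hterm : ∀ I : {I : Finset (Fin (δ + n)) // I.card = δ + 1},
      MvPolynomial.eval p (c I • ∏ i ∈ I.1, linForm (h i)) =
        c I * ∏ i ∈ I.1, dotL (h i) p := by
    intro I
    rw [MvPolynomial.smul_eq_C_mul, map_mul, MvPolynomial.eval_C, eval_prodForm]
  simp_rw [hterm] at heval
  have hsingle : ∀ I : {I : Finset (Fin (δ + n)) // I.card = δ + 1},
      I ∈ (Finset.univ : Finset _) → I ≠ I₀ → c I * ∏ i ∈ I.1, dotL (h i) p = 0 := by
    intro I _ hne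
    have : ∃ i ∈ I.1, i ∉ I₀.1 := by
      by_contra hsub
      push_neg at hsub
      have heq : I.1 = I₀.1 := Finset.eq_of_subset_of_card_le hsub (by rw [I.2, I₀.2])
      exact hne (Subtype.ext heq)
    obtain ⟨i, hiI, hiI₀⟩ := this
    have : dotL (h i) p = 0 := mem_KL.mp hpK i (by rw [hJ]; exact Finset.mem_compl.mpr hiI₀)
    rw [Finset.prod_eq_zero hiI this, mul_zero]
  rw [Finset.sum_eq_single_of_mem I₀ (Finset.mem_univ _) hsingle] at heval
  have hprod : ∏ i ∈ I₀.1, dotL (h i) p ≠ 0 :=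
    Finset.prod_ne_zero_iff.mpr fun i hi => hpne i hi
  exact (mul_eq_zero.mp heval).resolve_right hprod

end Main

section Main2
variable {n δ : ℕ} {h : Fin (δ + n) → Fin (n + 1) → ℂ}

lemma mem_vanishZ {q : MvPolynomial (Fin (n + 1)) ℂ} :
    q ∈ vanishZ n δ h ↔ ∀ x ∈ coneZ n δ h, MvPolynomial.eval x q = 0 := by
  simp only [vanishZ, Submodule.mem_iInf, LinearMap.mem_ker, AlgHom.toLinearMap_apply]
  constructor
  · intro hq x hx; rw [← aeval_eq_eval]; exact hq x hx
  · intro hq x hx; rw [aeval_eq_eval]; exact hq x hx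

lemma prodForm_mem_vanishZ {I : Finset (Fin (δ + n))} (hI : I.card = δ + 1) :
    (∏ i ∈ I, linForm (h i)) ∈ vanishZ n δ h := by
  rw [mem_vanishZ]
  rintro x ⟨hx0, L, hLcard, hvan⟩
  have hint : ∃ i ∈ I, i ∈ L := by
    by_contra hdis
    push_neg at hdis
    have hdisj : Disjoint I L := Finset.disjoint_left.mpr hdis
    have := Finset.card_union_of_disjoint hdisj
    have hle := Finset.card_le_univ (I ∪ L)
    rw [this, hI, hLcard, Fintype.card_fin] at hle
    omega
  obtain ⟨i, hiI, hiL⟩ := hint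
  rw [map_prod]
  exact Finset.prod_eq_zero hiI (hvan i hiL)

end Main2

/-- Let `Z ⊂ ℙ^n` be the `C(δ+n, n)` intersection points of `δ+n` general hyperplanes with
equations `h_1, …, h_{δ+n}` (`δ ≥ 1`).  The space of homogeneous polynomials of degree `δ+1`
vanishing on `Z` has dimension `C(δ+n, δ+1)`, and is spanned by the products
`h_I = ∏_{i∈I} h_i` for subsets `I` of size `δ+1`. -/
theorem degree_succ_through_points (n δ : ℕ) (hδ : 1 ≤ δ)
    (h : Fin (δ + n) → (Fin (n + 1) → ℂ))
    (hgen : ∀ T : Finset (Fin (δ + n)), T.card = n + 1 →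
      LinearIndependent ℂ (fun i : T => h i)) :
    Module.finrank ℂ
        ↥(MvPolynomial.homogeneousSubmodule (Fin (n + 1)) ℂ (δ + 1) ⊓ vanishZ n δ h) =
      Nat.choose (δ + n) (δ + 1) ∧
    MvPolynomial.homogeneousSubmodule (Fin (n + 1)) ℂ (δ + 1) ⊓ vanishZ n δ h =
      Submodule.span ℂ {p | ∃ I : Finset (Fin (δ + n)), I.card = δ + 1 ∧
        p = ∏ i ∈ I, linForm (h i)} := by
  classical
  set H := MvPolynomial.homogeneousSubmodule (Fin (n + 1)) ℂ (δ + 1) with hH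
  set W := H ⊓ vanishZ n δ h with hW
  haveI : FiniteDimensional ℂ ↥H := finDimHomog (n + 1) (δ + 1)
  haveI : FiniteDimensional ℂ ↥W := Submodule.finiteDimensional_of_le inf_le_left
  have hy : ∀ L : {L : Finset (Fin (δ + n)) // L.card = n},
      ∃ z : Fin (n + 1) → ℂ, z ≠ 0 ∧ z ∈ KL h L.1 :=
    fun L => exists_point (le_of_eq L.2)
  choose y hy0 hyK using hy
  have hyCone : ∀ L, y L ∈ coneZ n δ h := fun L =>
    ⟨hy0 L, L.1, L.2, fun i hi => by rw [eval_linForm]; exact mem_KL.mp (hyK L) i hi⟩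
  set E : ↥H →ₗ[ℂ] ({L : Finset (Fin (δ + n)) // L.card = n} → ℂ) :=
    LinearMap.pi (fun L => ((MvPolynomial.aeval (y L)).toLinearMap).comp H.subtype) with hE
  have hEapp : ∀ (q : ↥H) L, E q L = MvPolynomial.eval (y L) q.1 := by
    intro q L
    simp [hE, aeval_eq_eval]
  have hWker : W = Submodule.map H.subtype (LinearMap.ker E) := by
    ext q
    constructor
    · intro hq
      obtain ⟨hqH, hqV⟩ := Submodule.mem_inf.mp hq
      refine Submodule.mem_map.mpr ⟨⟨q, hqH⟩, ?_, rfl⟩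
      rw [LinearMap.mem_ker]
      funext L
      rw [hEapp, Pi.zero_apply]
      exact mem_vanishZ.mp hqV (y L) (hyCone L)
    · rintro ⟨⟨q', hq'H⟩, hker, rfl⟩
      refine Submodule.mem_inf.mpr ⟨hq'H, ?_⟩
      rw [mem_vanishZ]
      rintro x ⟨hx0, L', hL'card, hvan⟩
      have hxK : x ∈ KL h L' := mem_KL.mpr fun i hi => by
        rw [← eval_linForm]; exact hvan i hi
      set L : {L : Finset (Fin (δ + n)) // L.card = n} := ⟨L', hL'card⟩
      obtain ⟨c, rfl⟩ := eq_smul_of_mem_KL hgen hδ hL'card (hy0 L) (hyK L) hxK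
      show MvPolynomial.eval (c • y L) q' = 0
      rw [eval_smul_of_isHomogeneous hq'H]
      have h0 : MvPolynomial.eval (y L) q' = 0 := by
        have := congrFun (LinearMap.mem_ker.mp hker) L
        rwa [hEapp, Pi.zero_apply] at this
      rw [h0, mul_zero]
  have hEsurj : LinearMap.range E = ⊤ := by
    rw [eq_top_iff]
    intro f _
    have hf : f = ∑ L, Pi.single L (f L) := (Finset.univ_sum_single f).symm
    rw [hf]
    refine Submodule.sum_mem _ fun L₀ _ => ?_
    obtain ⟨j, hj⟩ := Function.ne_iff.mp (hy0 L₀)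
    set Q : MvPolynomial (Fin (n + 1)) ℂ :=
      MvPolynomial.X j * ∏ i ∈ L₀.1ᶜ, linForm (h i) with hQ
    have hcompl : L₀.1ᶜ.card = δ := by
      rw [Finset.card_compl, Fintype.card_fin, L₀.2]; omega
    have hQH : Q ∈ H := by
      rw [hH, MvPolynomial.mem_homogeneousSubmodule]
      have h1 : (MvPolynomial.X j : MvPolynomial (Fin (n + 1)) ℂ).IsHomogeneous 1 :=
        MvPolynomial.isHomogeneous_X _ _
      have h2 : (∏ i ∈ L₀.1ᶜ, linForm (h i)).IsHomogeneous δ := by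
        have := MvPolynomial.IsHomogeneous.prod L₀.1ᶜ (fun i => linForm (h i)) (fun _ => 1)
          (fun i _ => linForm_isHomogeneous (h i))
        simpa [Finset.sum_const, hcompl] using this
      have := h1.mul h2
      simpa [add_comm] using this
    have hQval : ∀ L, MvPolynomial.eval (y L) Q
        = y L j * ∏ i ∈ L₀.1ᶜ, dotL (h i) (y L) := by
      intro L
      rw [hQ, map_mul, MvPolynomial.eval_X, eval_prodForm]
    have hc0 : MvPolynomial.eval (y L₀) Q ≠ 0 := by
      rw [hQval]
      refine mul_ne_zero hj ?_
      refine Finset.prod_ne_zero_iff.mpr fun i hi hzero => ?_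
      have hiL : i ∉ L₀.1 := Finset.mem_compl.mp hi
      have hT : (insert i L₀.1).card = n + 1 := by
        rw [Finset.card_insert_of_notMem hiL, L₀.2]
      refine hy0 L₀ ?_
      refine eq_zero_of_dot hgen hT fun i' hi' => ?_
      rcases Finset.mem_insert.mp hi' with rfl | hi'L
      · exact hzero
      · exact mem_KL.mp (hyK L₀) i' hi'L
    have hEQ : E ⟨Q, hQH⟩ = Pi.single L₀ (MvPolynomial.eval (y L₀) Q) := by
      funext L
      rw [hEapp]
      by_cases hLL : L = L₀
      · subst hLL; rw [Pi.single_eq_same]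
      · rw [Pi.single_eq_of_ne hLL]
        have hex : ∃ i ∈ L.1, i ∉ L₀.1 := by
          by_contra hsub
          push_neg at hsub
          exact hLL (Subtype.ext (Finset.eq_of_subset_of_card_le hsub (by rw [L.2, L₀.2])))
        obtain ⟨i, hiL, hiL₀⟩ := hex
        have hdz : dotL (h i) (y L) = 0 := mem_KL.mp (hyK L) i hiL
        rw [hQval, Finset.prod_eq_zero (Finset.mem_compl.mpr hiL₀) hdz, mul_zero]
    refine LinearMap.mem_range.mpr
      ⟨(f L₀ / MvPolynomial.eval (y L₀) Q) • ⟨Q, hQH⟩, ?_⟩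
    rw [map_smul, hEQ, ← Pi.single_smul, smul_eq_mul, div_mul_cancel₀ _ hc0]
  have hrank := LinearMap.finrank_range_add_finrank_ker E
  rw [hEsurj, finrank_top] at hrank
  have hcodomain : Module.finrank ℂ ({L : Finset (Fin (δ + n)) // L.card = n} → ℂ)
      = (δ + n).choose n := by
    rw [Module.finrank_pi, Fintype.card_finset_len, Fintype.card_fin]
  have hdomain : Module.finrank ℂ ↥H = (δ + n + 1).choose (δ + 1) := by
    rw [hH, finrank_homog]
    congr 1
    omega
  rw [hcodomain, hdomain] at hrank
  have hker_rank : Module.finrank ℂ ↥(LinearMap.ker E) = (δ + n).choose (δ + 1) := by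
    have hpascal : (δ + n + 1).choose (δ + 1) = (δ + n).choose δ + (δ + n).choose (δ + 1) :=
      Nat.choose_succ_succ' (δ + n) δ
    have hsymm : (δ + n).choose n = (δ + n).choose δ := by
      have := Nat.choose_symm (show δ ≤ δ + n by omega)
      rw [show δ + n - δ = n by omega] at this
      exact this
    omega
  have hWrank : Module.finrank ℂ ↥W = (δ + n).choose (δ + 1) := by
    rw [hWker, Submodule.finrank_map_subtype_eq]
    exact hker_rank
  set g : {I : Finset (Fin (δ + n)) // I.card = δ + 1} → MvPolynomial (Fin (n + 1)) ℂ :=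
    fun I => ∏ i ∈ I.1, linForm (h i) with hg
  have hgW : ∀ I, g I ∈ W := fun I =>
    Submodule.mem_inf.mpr ⟨prodForm_isHomog I.2, prodForm_mem_vanishZ I.2⟩
  set g' : _ → ↥W := fun I => (⟨g I, hgW I⟩ : ↥W) with hg'
  have hindep' : LinearIndependent ℂ g' := by
    apply LinearIndependent.of_comp W.subtype
    exact lin_indep_prod hgen hδ
  have hcard : Fintype.card {I : Finset (Fin (δ + n)) // I.card = δ + 1}
      = (δ + n).choose (δ + 1) := by
    rw [Fintype.card_finset_len, Fintype.card_fin]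
  have hspan' : Submodule.span ℂ (Set.range g') = ⊤ := by
    apply Submodule.eq_top_of_finrank_eq
    rw [finrank_span_eq_card hindep', hcard, hWrank]
  have hsetS : {p : MvPolynomial (Fin (n + 1)) ℂ | ∃ I : Finset (Fin (δ + n)),
      I.card = δ + 1 ∧ p = ∏ i ∈ I, linForm (h i)} = Set.range g := by
    ext p
    constructor
    · rintro ⟨I, hI, rfl⟩; exact ⟨⟨I, hI⟩, rfl⟩
    · rintro ⟨I, rfl⟩; exact ⟨I.1, I.2, rfl⟩
  have hspanW : Submodule.span ℂ (Set.range g) = W := by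
    have hrg : Set.range g = W.subtype '' Set.range g' := by
      rw [← Set.range_comp]; rfl
    rw [hrg, Submodule.span_image, hspan', Submodule.map_top, Submodule.range_subtype]
  exact ⟨hWrank, by rw [hsetS, hspanW]⟩
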